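/- There exist absolute constants 0 < c ≤ C such that for every κ > 0 and every ζ ∈ ℝ one has c · log(4 + ζ²/κ²) / √(4κ² + ζ²) ≤ ∫_ℝ (κ² + (ζ − η)²)^{−1/2} (κ² + η²)^{−1/2} dη ≤ C · log(4 + ζ²/κ²) / √(4κ² + ζ²). -/

import Mathlib

open MeasureTheory Set Real Filter

noncomputable def fz (z u : ℝ) : ℝ :=
  (Real.sqrt (1 + (z - u) ^ 2) * Real.sqrt (1 + u ^ 2))⁻¹

lemma sqrt1_pos (t : ℝ) : 0 < Real.sqrt (1 + t ^ 2) := Real.sqrt_pos.2 (by positivity)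

lemma one_le_sqrt1 (t : ℝ) : 1 ≤ Real.sqrt (1 + t ^ 2) :=
  Real.one_le_sqrt.2 (by nlinarith [sq_nonneg t])

lemma fz_nonneg (z u : ℝ) : 0 ≤ fz z u := by unfold fz; positivity

lemma cont_inv_sqrt : Continuous fun u : ℝ => (Real.sqrt (1 + u ^ 2))⁻¹ := by
  apply Continuous.inv₀
  · exact Real.continuous_sqrt.comp (by continuity)
  · intro x; exact (sqrt1_pos x).ne'

lemma fz_cont (z : ℝ) : Continuous (fz z) := by
  apply Continuous.inv₀
  · apply Continuous.mul
    · exact Real.continuous_sqrt.comp (by continuity)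
    · exact Real.continuous_sqrt.comp (by continuity)
  · intro x
    have := sqrt1_pos (z - x); have := sqrt1_pos x
    positivity

lemma fz_integrable (z : ℝ) : Integrable (fz z) := by
  have hmaj : ∀ u : ℝ, ‖fz z u‖ ≤ ((1 + (z - u) ^ 2)⁻¹ + (1 + u ^ 2)⁻¹) / 2 := by
    intro u
    rw [Real.norm_eq_abs, abs_of_nonneg (fz_nonneg z u)]
    unfold fz
    have ha := sqrt1_pos (z - u); have hb := sqrt1_pos u
    have ha2 : Real.sqrt (1 + (z - u) ^ 2) ^ 2 = 1 + (z - u) ^ 2 := Real.sq_sqrt (by positivity)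
    have hb2 : Real.sqrt (1 + u ^ 2) ^ 2 = 1 + u ^ 2 := Real.sq_sqrt (by positivity)
    have gen : ∀ a b : ℝ, 0 < a → 0 < b → (a * b)⁻¹ ≤ ((a ^ 2)⁻¹ + (b ^ 2)⁻¹) / 2 := by
      intro a b ha hb
      rw [mul_inv, ← inv_pow, ← inv_pow]
      nlinarith [sq_nonneg (a⁻¹ - b⁻¹)]
    calc (Real.sqrt (1 + (z - u) ^ 2) * Real.sqrt (1 + u ^ 2))⁻¹
        ≤ ((Real.sqrt (1 + (z - u) ^ 2) ^ 2)⁻¹ + (Real.sqrt (1 + u ^ 2) ^ 2)⁻¹) / 2 :=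
          gen _ _ ha hb
      _ = ((1 + (z - u) ^ 2)⁻¹ + (1 + u ^ 2)⁻¹) / 2 := by rw [ha2, hb2]
  have hg : Integrable (fun u : ℝ => ((1 + (z - u) ^ 2)⁻¹ + (1 + u ^ 2)⁻¹) / 2) := by
    apply Integrable.div_const
    exact ((integrable_comp_sub_left (fun x : ℝ => (1 + x ^ 2)⁻¹) z).2
      integrable_inv_one_add_sq).add integrable_inv_one_add_sq
  exact hg.mono' (fz_cont z).aestronglyMeasurable (Filter.Eventually.of_forall hmaj)

lemma integral_arsinh (a b : ℝ) :
    ∫ u in a..b, (Real.sqrt (1 + u ^ 2))⁻¹ = Real.arsinh b - Real.arsinh a := by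
  apply intervalIntegral.integral_eq_sub_of_hasDerivAt
  · intro x _; exact Real.hasDerivAt_arsinh x
  · exact cont_inv_sqrt.intervalIntegrable _ _

lemma tail_hasderiv (R : ℝ) (hR : 0 < R) :
    ∀ x ∈ Ici R, HasDerivAt (fun u : ℝ => -u⁻¹) ((x ^ 2)⁻¹) x := by
  intro x hx
  have hx0 : x ≠ 0 := by
    have : R ≤ x := hx
    intro h; rw [h] at this; linarith
  have h := (hasDerivAt_inv hx0).neg
  simp only [neg_neg] at h
  exact h

lemma tail_tendsto : Tendsto (fun u : ℝ => -u⁻¹) atTop (nhds 0) := by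
  simpa using (tendsto_inv_atTop_zero (𝕜 := ℝ)).neg

lemma tail_integrable (R : ℝ) (hR : 0 < R) :
    IntegrableOn (fun u : ℝ => 2 * (u ^ 2)⁻¹) (Ioi R) := by
  apply Integrable.const_mul
  exact integrableOn_Ioi_deriv_of_nonneg' (tail_hasderiv R hR)
    (fun x _ => by positivity) tail_tendsto

lemma tail_integral (R : ℝ) (hR : 0 < R) :
    ∫ u in Ioi R, 2 * (u ^ 2)⁻¹ = 2 / R := by
  rw [integral_const_mul]
  rw [integral_Ioi_of_hasDerivAt_of_nonneg' (tail_hasderiv R hR)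
    (fun x _ => by positivity) tail_tendsto]
  field_simp
  ring

/-- global pointwise bound for the bulk region -/
lemma fz_le_bulk (z u : ℝ) :
    fz z u ≤ 2 / Real.sqrt (4 + z ^ 2) *
      ((Real.sqrt (1 + u ^ 2))⁻¹ + (Real.sqrt (1 + (z - u) ^ 2))⁻¹) := by
  have h4 : (0:ℝ) < Real.sqrt (4 + z ^ 2) := Real.sqrt_pos.2 (by positivity)
  have key : ∀ t : ℝ, z ^ 2 ≤ 4 * t ^ 2 →
      (Real.sqrt (1 + t ^ 2))⁻¹ ≤ 2 / Real.sqrt (4 + z ^ 2) := by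
    intro t ht
    have hs := sqrt1_pos t
    have h1 : Real.sqrt (4 + z ^ 2) ≤ 2 * Real.sqrt (1 + t ^ 2) := by
      have h2 : Real.sqrt (4 + 4 * t ^ 2) = 2 * Real.sqrt (1 + t ^ 2) := by
        rw [show (4:ℝ) + 4 * t ^ 2 = 2 ^ 2 * (1 + t ^ 2) by ring,
          Real.sqrt_mul (by positivity), Real.sqrt_sq (by norm_num)]
      have h3 : Real.sqrt (4 + z ^ 2) ≤ Real.sqrt (4 + 4 * t ^ 2) :=
        Real.sqrt_le_sqrt (by linarith)
      linarith
    rw [le_div_iff₀ h4]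
    calc (Real.sqrt (1 + t ^ 2))⁻¹ * Real.sqrt (4 + z ^ 2)
        ≤ (Real.sqrt (1 + t ^ 2))⁻¹ * (2 * Real.sqrt (1 + t ^ 2)) := by
          apply mul_le_mul_of_nonneg_left h1 (by positivity)
      _ = 2 := by field_simp
  have habs : z ^ 2 ≤ 4 * u ^ 2 ∨ z ^ 2 ≤ 4 * (z - u) ^ 2 := by
    rcases le_total (u ^ 2) ((z - u) ^ 2) with h | h
    · right; nlinarith [sq_nonneg (u - (z - u))]
    · left; nlinarith [sq_nonneg (u - (z - u))]
  have efz : fz z u = (Real.sqrt (1 + (z - u) ^ 2))⁻¹ * (Real.sqrt (1 + u ^ 2))⁻¹ := by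
    unfold fz; rw [mul_inv]
  have ha : (0:ℝ) ≤ (Real.sqrt (1 + (z - u) ^ 2))⁻¹ := by positivity
  have hb : (0:ℝ) ≤ (Real.sqrt (1 + u ^ 2))⁻¹ := by positivity
  have hc : (0:ℝ) ≤ 2 / Real.sqrt (4 + z ^ 2) := by positivity
  rw [efz]
  rcases habs with h | h
  · have h1 := key u h
    nlinarith [mul_le_mul_of_nonneg_left h1 ha, mul_nonneg hc ha]
  · have h1 := key (z - u) h
    nlinarith [mul_le_mul_of_nonneg_right h1 hb, mul_nonneg hc hb]

/-- pointwise tail bound -/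
lemma fz_le_tail (z m u : ℝ) (hm1 : 1 ≤ m) (hmz : |z| ≤ m) (hu : 2 * m ≤ |u|) :
    fz z u ≤ 2 * (u ^ 2)⁻¹ := by
  have hu0 : (0:ℝ) < |u| := by linarith
  have hA : |u| / 2 ≤ Real.sqrt (1 + (z - u) ^ 2) := by
    have h1 : |u| / 2 ≤ |z - u| := by
      have h2 : |u| - |z| ≤ |u - z| := abs_sub_abs_le_abs_sub u z
      have h3 : |u - z| = |z - u| := abs_sub_comm u z
      linarith
    calc |u| / 2 ≤ |z - u| := h1
      _ = Real.sqrt ((z - u) ^ 2) := (Real.sqrt_sq_eq_abs _).symm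
      _ ≤ Real.sqrt (1 + (z - u) ^ 2) := Real.sqrt_le_sqrt (by linarith)
  have hB : |u| ≤ Real.sqrt (1 + u ^ 2) := by
    calc |u| = Real.sqrt (u ^ 2) := (Real.sqrt_sq_eq_abs _).symm
      _ ≤ Real.sqrt (1 + u ^ 2) := Real.sqrt_le_sqrt (by linarith)
  have hprod : u ^ 2 / 2 ≤ Real.sqrt (1 + (z - u) ^ 2) * Real.sqrt (1 + u ^ 2) := by
    calc u ^ 2 / 2 = (|u| / 2) * |u| := by rw [← sq_abs]; ring
      _ ≤ _ := mul_le_mul hA hB (abs_nonneg u) (by positivity)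
  have hup : (0:ℝ) < u ^ 2 := by
    have := sq_abs u; nlinarith
  have : (Real.sqrt (1 + (z - u) ^ 2) * Real.sqrt (1 + u ^ 2))⁻¹ ≤ (u ^ 2 / 2)⁻¹ := by
    apply inv_anti₀ (by positivity) hprod
  calc fz z u ≤ (u ^ 2 / 2)⁻¹ := this
    _ = 2 * (u ^ 2)⁻¹ := by field_simp

lemma bulk_integral (z R : ℝ) (hR : 0 ≤ R) :
    ∫ u in Ioc (-R) R, 2 / Real.sqrt (4 + z ^ 2) *
        ((Real.sqrt (1 + u ^ 2))⁻¹ + (Real.sqrt (1 + (z - u) ^ 2))⁻¹)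
      = 2 / Real.sqrt (4 + z ^ 2) *
        ((Real.arsinh R - Real.arsinh (-R)) + (Real.arsinh (z + R) - Real.arsinh (z - R))) := by
  rw [← intervalIntegral.integral_of_le (by linarith : -R ≤ R),
    intervalIntegral.integral_const_mul]
  congr 1
  have h1 : IntervalIntegrable (fun u : ℝ => (Real.sqrt (1 + u ^ 2))⁻¹) volume (-R) R :=
    cont_inv_sqrt.intervalIntegrable _ _
  have h2 : IntervalIntegrable (fun u : ℝ => (Real.sqrt (1 + (z - u) ^ 2))⁻¹) volume (-R) R := by
    apply Continuous.intervalIntegrable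
    exact cont_inv_sqrt.comp (continuous_const.sub continuous_id)
  rw [intervalIntegral.integral_add h1 h2, integral_arsinh]
  congr 1
  rw [intervalIntegral.integral_comp_sub_left (fun v => (Real.sqrt (1 + v ^ 2))⁻¹) z,
    integral_arsinh, sub_neg_eq_add]

lemma log_ge (z : ℝ) : (1.2 : ℝ) ≤ Real.log (4 + z ^ 2) := by
  have h2 : (0.6931471803 : ℝ) < Real.log 2 := Real.log_two_gt_d9
  have h4 : Real.log 4 = 2 * Real.log 2 := by
    rw [show (4:ℝ) = 2 ^ 2 by norm_num, Real.log_pow]; push_cast; ring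
  have h5 : Real.log 4 ≤ Real.log (4 + z ^ 2) :=
    Real.log_le_log (by norm_num) (by nlinarith [sq_nonneg z])
  nlinarith

lemma upper_z (z : ℝ) :
    ∫ u, fz z u ≤ 21 * (Real.log (4 + z ^ 2) / Real.sqrt (4 + z ^ 2)) := by
  set m := max 1 |z| with hm
  have hm1 : (1:ℝ) ≤ m := le_max_left _ _
  have hmz : |z| ≤ m := le_max_right _ _
  have hm0 : (0:ℝ) < m := by linarith
  have hz2 : z ^ 2 ≤ m ^ 2 := by
    nlinarith [sq_abs z, pow_le_pow_left₀ (abs_nonneg z) hmz 2]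
  have hR0 : (0:ℝ) < 2 * m := by linarith
  have hsq : (0:ℝ) < Real.sqrt (4 + z ^ 2) := Real.sqrt_pos.2 (by positivity)
  have hsplit : ∫ u, fz z u
      = (∫ u in Ioc (-(2*m)) (2*m), fz z u) + ∫ u in (Ioc (-(2*m)) (2*m))ᶜ, fz z u :=
    (integral_add_compl measurableSet_Ioc (fz_integrable z)).symm
  -- bulk
  have hbulk : ∫ u in Ioc (-(2*m)) (2*m), fz z u
      ≤ 2 / Real.sqrt (4 + z ^ 2) *
        ((Real.arsinh (2*m) - Real.arsinh (-(2*m)))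
          + (Real.arsinh (z + 2*m) - Real.arsinh (z - 2*m))) := by
    rw [← bulk_integral z (2*m) (by linarith)]
    apply setIntegral_mono_on ((fz_integrable z).integrableOn) ?_ measurableSet_Ioc
      (fun x _ => fz_le_bulk z x)
    apply Continuous.integrableOn_Ioc
    exact continuous_const.mul (cont_inv_sqrt.add
      (cont_inv_sqrt.comp (continuous_const.sub continuous_id)))
  have h3m : Real.arsinh (3 * m) ≤ Real.log (7 * m) := by
    have hs : Real.sqrt (1 + (3*m)^2) ≤ 4 * m := by
      rw [show (4:ℝ)*m = Real.sqrt ((4*m)^2) from (Real.sqrt_sq (by positivity)).symm]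
      exact Real.sqrt_le_sqrt (by nlinarith)
    simp only [Real.arsinh]
    apply Real.log_le_log (by positivity)
    linarith
  have habsz := abs_le.mp hmz
  have hbr : (Real.arsinh (2*m) - Real.arsinh (-(2*m)))
      + (Real.arsinh (z + 2*m) - Real.arsinh (z - 2*m)) ≤ 4 * Real.arsinh (3 * m) := by
    have e1 : Real.arsinh (2*m) ≤ Real.arsinh (3*m) := Real.arsinh_le_arsinh.2 (by linarith)
    have e2 : Real.arsinh (-(3*m)) ≤ Real.arsinh (-(2*m)) := Real.arsinh_le_arsinh.2 (by linarith)
    have e3 : Real.arsinh (z + 2*m) ≤ Real.arsinh (3*m) := Real.arsinh_le_arsinh.2 (by linarith)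
    have e4 : Real.arsinh (-(3*m)) ≤ Real.arsinh (z - 2*m) := Real.arsinh_le_arsinh.2 (by linarith)
    rw [Real.arsinh_neg] at e2 e4
    linarith
  have hlog7 : Real.log (7 * m) ≤ 2 * Real.log (4 + z ^ 2) := by
    rw [show 2 * Real.log (4 + z^2) = Real.log ((4 + z^2)^2) by
      rw [Real.log_pow]; push_cast; ring]
    apply Real.log_le_log (by positivity)
    rcases max_cases (1:ℝ) |z| with ⟨h1, _⟩ | ⟨h1, h2⟩
    · rw [hm, h1]; nlinarith [sq_nonneg z]
    · rw [hm, h1]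
      nlinarith [sq_abs z, mul_le_mul_of_nonneg_left h2.le (abs_nonneg z), sq_nonneg (z^2)]
  -- tail
  have hcompl : (Ioc (-(2*m)) (2*m))ᶜ = Iic (-(2*m)) ∪ Ioi (2*m) := by
    ext x
    simp only [mem_compl_iff, mem_Ioc, mem_union, mem_Iic, mem_Ioi, not_and, not_le]
    constructor
    · intro h
      rcases le_or_gt x (-(2*m)) with h1 | h1
      · exact Or.inl h1
      · exact Or.inr (h h1)
    · intro h h1
      rcases h with h | h
      · linarith
      · exact h
  have htail1 : ∫ u in Ioi (2*m), fz z u ≤ 2 / (2*m) := by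
    rw [← tail_integral (2*m) hR0]
    apply setIntegral_mono_on ((fz_integrable z).integrableOn) (tail_integrable (2*m) hR0)
      measurableSet_Ioi
    intro x hx
    have hx2 : 2*m ≤ |x| := by
      rw [abs_of_pos (lt_trans hR0 hx)]; exact le_of_lt hx
    exact fz_le_tail z m x hm1 hmz hx2
  have htail2 : ∫ u in Iic (-(2*m)), fz z u ≤ 2 / (2*m) := by
    have hswap : ∫ u in Iic (-(2*m)), fz z u = ∫ u in Ioi (2*m), fz z (-u) := by
      have h := integral_comp_neg_Iic (-(2*m)) (fun y => fz z (-y))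
      simp only [neg_neg] at h
      exact h
    rw [hswap, ← tail_integral (2*m) hR0]
    apply setIntegral_mono_on ((fz_integrable z).comp_neg.integrableOn)
      (tail_integrable (2*m) hR0) measurableSet_Ioi
    intro x hx
    have hx2 : 2*m ≤ |(-x)| := by
      rw [abs_neg, abs_of_pos (lt_trans hR0 hx)]; exact le_of_lt hx
    have := fz_le_tail z m (-x) hm1 hmz hx2
    simpa [neg_sq] using this
  have htail : ∫ u in (Ioc (-(2*m)) (2*m))ᶜ, fz z u ≤ 2 / m := by
    rw [hcompl, setIntegral_union (Iic_disjoint_Ioi (by linarith)) measurableSet_Ioi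
      ((fz_integrable z).integrableOn) ((fz_integrable z).integrableOn)]
    have he : 2 / (2*m) + 2 / (2*m) = 2 / m := by field_simp; ring
    linarith
  -- numeric comparisons
  have hsq3 : Real.sqrt (4 + z ^ 2) ≤ 3 * m := by
    rw [show (3:ℝ)*m = Real.sqrt ((3*m)^2) from (Real.sqrt_sq (by positivity)).symm]
    exact Real.sqrt_le_sqrt (by nlinarith)
  have hlog12 : (1.2:ℝ) ≤ Real.log (4 + z ^ 2) := log_ge z
  have htail_unit : 2 / m ≤ 5 * (Real.log (4 + z ^ 2) / Real.sqrt (4 + z ^ 2)) := by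
    rw [show 5 * (Real.log (4+z^2) / Real.sqrt (4+z^2))
        = 5 * Real.log (4+z^2) / Real.sqrt (4+z^2) by ring,
      div_le_div_iff₀ hm0 hsq]
    nlinarith [mul_nonneg (by linarith : (0:ℝ) ≤ Real.log (4+z^2) - 1.2) hm0.le]
  have hbulk2 : ∫ u in Ioc (-(2*m)) (2*m), fz z u
      ≤ 16 * (Real.log (4+z^2) / Real.sqrt (4+z^2)) := by
    have h1 : Real.arsinh (3*m) ≤ 2 * Real.log (4+z^2) := le_trans h3m hlog7
    have h2 : (0:ℝ) ≤ 2 / Real.sqrt (4+z^2) := by positivity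
    calc ∫ u in Ioc (-(2*m)) (2*m), fz z u
        ≤ 2 / Real.sqrt (4 + z ^ 2) *
          ((Real.arsinh (2*m) - Real.arsinh (-(2*m)))
            + (Real.arsinh (z + 2*m) - Real.arsinh (z - 2*m))) := hbulk
      _ ≤ 2 / Real.sqrt (4+z^2) * (4 * (2 * Real.log (4+z^2))) := by
          apply mul_le_mul_of_nonneg_left (by linarith) h2
      _ = 16 * (Real.log (4+z^2) / Real.sqrt (4+z^2)) := by ring
  rw [hsplit]
  linarith [le_trans htail htail_unit]

lemma lower_z (z : ℝ) :
    (1/12) * (Real.log (4 + z ^ 2) / Real.sqrt (4 + z ^ 2)) ≤ ∫ u, fz z u := by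
  set m := max 1 |z| with hm
  have hm1 : (1:ℝ) ≤ m := le_max_left _ _
  have hmz : |z| ≤ m := le_max_right _ _
  have hm0 : (0:ℝ) < m := by linarith
  have hz2 : z ^ 2 ≤ m ^ 2 := by
    nlinarith [sq_abs z, pow_le_pow_left₀ (abs_nonneg z) hmz 2]
  have hsq : (0:ℝ) < Real.sqrt (4 + z ^ 2) := Real.sqrt_pos.2 (by positivity)
  have hs2m := sqrt1_pos (2*m)
  have h1 : ∫ u in Ioc 0 m, fz z u ≤ ∫ u, fz z u :=
    setIntegral_le_integral (fz_integrable z) (Filter.Eventually.of_forall (fz_nonneg z))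
  have habsz := abs_le.mp hmz
  have h2 : ∫ u in Ioc 0 m, (Real.sqrt (1+(2*m)^2))⁻¹ * (Real.sqrt (1+u^2))⁻¹
      ≤ ∫ u in Ioc 0 m, fz z u := by
    apply setIntegral_mono_on ?_ ((fz_integrable z).integrableOn) measurableSet_Ioc ?_
    · apply Continuous.integrableOn_Ioc
      exact continuous_const.mul cont_inv_sqrt
    · intro x hx
      obtain ⟨hx0, hxm⟩ := hx
      have hzu : (z - x)^2 ≤ (2*m)^2 := by nlinarith
      have hle : Real.sqrt (1 + (z-x)^2) ≤ Real.sqrt (1+(2*m)^2) :=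
        Real.sqrt_le_sqrt (by linarith)
      have hinv : (Real.sqrt (1+(2*m)^2))⁻¹ ≤ (Real.sqrt (1 + (z-x)^2))⁻¹ :=
        inv_anti₀ (sqrt1_pos _) hle
      have efz : fz z x = (Real.sqrt (1 + (z-x)^2))⁻¹ * (Real.sqrt (1+x^2))⁻¹ := by
        unfold fz; rw [mul_inv]
      rw [efz]
      exact mul_le_mul_of_nonneg_right hinv (by positivity)
  have h3 : ∫ u in Ioc 0 m, (Real.sqrt (1+(2*m)^2))⁻¹ * (Real.sqrt (1+u^2))⁻¹
      = (Real.sqrt (1+(2*m)^2))⁻¹ * Real.arsinh m := by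
    rw [← intervalIntegral.integral_of_le (by linarith : (0:ℝ) ≤ m),
      intervalIntegral.integral_const_mul, integral_arsinh]
    simp
  have ha : Real.log (1+m) ≤ Real.arsinh m := by
    simp only [Real.arsinh]
    apply Real.log_le_log (by positivity)
    linarith [one_le_sqrt1 m]
  have hb : Real.log (4 + z^2) ≤ 4 * Real.log (1+m) := by
    rw [show 4*Real.log (1+m) = Real.log ((1+m)^4) by rw [Real.log_pow]; push_cast; ring]
    apply Real.log_le_log (by positivity)
    nlinarith
  have hc : Real.sqrt (1+(2*m)^2) ≤ 3*m := by
    rw [show (3:ℝ)*m = Real.sqrt ((3*m)^2) from (Real.sqrt_sq (by positivity)).symm]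
    exact Real.sqrt_le_sqrt (by nlinarith)
  have hd : m ≤ Real.sqrt (4 + z^2) := by
    rcases max_cases (1:ℝ) |z| with ⟨he, _⟩ | ⟨he, _⟩
    · rw [hm, he]
      nlinarith [Real.sq_sqrt (show (0:ℝ) ≤ 4+z^2 by positivity), hsq, sq_nonneg z]
    · rw [hm, he]
      calc |z| = Real.sqrt (z^2) := (Real.sqrt_sq_eq_abs z).symm
        _ ≤ Real.sqrt (4+z^2) := Real.sqrt_le_sqrt (by linarith)
  have hlogpos : (0:ℝ) ≤ Real.log (4+z^2) := Real.log_nonneg (by nlinarith [sq_nonneg z])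
  have harpos : (0:ℝ) ≤ Real.arsinh m := Real.arsinh_nonneg_iff.2 hm0.le
  have key : (1/12) * (Real.log (4+z^2) / Real.sqrt (4+z^2))
      ≤ (Real.sqrt (1+(2*m)^2))⁻¹ * Real.arsinh m := by
    calc (1/12) * (Real.log (4+z^2) / Real.sqrt (4+z^2))
        = Real.log (4+z^2) / (12 * Real.sqrt (4+z^2)) := by ring
      _ ≤ Real.log (4+z^2) / (12 * m) := by gcongr
      _ ≤ (4 * Real.log (1+m)) / (12*m) := by gcongr
      _ = Real.log (1+m) / (3*m) := by ring
      _ ≤ Real.arsinh m / (3*m) := by gcongr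
      _ ≤ Real.arsinh m / Real.sqrt (1+(2*m)^2) := by gcongr
      _ = (Real.sqrt (1+(2*m)^2))⁻¹ * Real.arsinh m := by
          rw [div_eq_mul_inv, mul_comm]
  rw [h3] at h2
  linarith

theorem stmt_10 :
    ∃ c C : ℝ, 0 < c ∧ c ≤ C ∧
      ∀ κ : ℝ, 0 < κ → ∀ ζ : ℝ,
        (c * (Real.log (4 + ζ ^ 2 / κ ^ 2) / Real.sqrt (4 * κ ^ 2 + ζ ^ 2))
            ≤ ∫ η : ℝ, (Real.sqrt (κ ^ 2 + (ζ - η) ^ 2) * Real.sqrt (κ ^ 2 + η ^ 2))⁻¹) ∧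
        ((∫ η : ℝ, (Real.sqrt (κ ^ 2 + (ζ - η) ^ 2) * Real.sqrt (κ ^ 2 + η ^ 2))⁻¹)
            ≤ C * (Real.log (4 + ζ ^ 2 / κ ^ 2) / Real.sqrt (4 * κ ^ 2 + ζ ^ 2))) := by
  refine ⟨1/12, 21, by norm_num, by norm_num, ?_⟩
  intro κ hκ ζ
  set z := ζ / κ with hz
  have hκ0 : κ ≠ 0 := hκ.ne'
  have hint : (∫ η : ℝ, (Real.sqrt (κ ^ 2 + (ζ - η) ^ 2) * Real.sqrt (κ ^ 2 + η ^ 2))⁻¹)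
      = κ⁻¹ * ∫ u, fz z u := by
    have hpt : ∀ η : ℝ, (Real.sqrt (κ ^ 2 + (ζ - η) ^ 2) * Real.sqrt (κ ^ 2 + η ^ 2))⁻¹
        = κ⁻¹ ^ 2 * fz z (κ⁻¹ * η) := by
      intro η
      have e1 : κ^2 + (ζ-η)^2 = κ^2 * (1 + (z - κ⁻¹*η)^2) := by
        rw [hz]; field_simp
      have e2 : κ^2 + η^2 = κ^2 * (1 + (κ⁻¹*η)^2) := by
        field_simp
      rw [e1, e2, Real.sqrt_mul (by positivity), Real.sqrt_mul (by positivity),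
        Real.sqrt_sq hκ.le]
      unfold fz
      have hsA := sqrt1_pos (z - κ⁻¹*η)
      have hsB := sqrt1_pos (κ⁻¹*η)
      field_simp
    simp_rw [hpt]
    rw [integral_const_mul, Measure.integral_comp_inv_mul_left (fz z) κ,
      abs_of_pos hκ, smul_eq_mul]
    field_simp
  have hsqrt : Real.sqrt (4 * κ ^ 2 + ζ ^ 2) = κ * Real.sqrt (4 + z ^ 2) := by
    rw [show 4*κ^2+ζ^2 = κ^2 * (4 + z^2) by rw [hz]; field_simp,
      Real.sqrt_mul (by positivity), Real.sqrt_sq hκ.le]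
  have hzz : 4 + ζ^2/κ^2 = 4 + z^2 := by rw [hz, div_pow]
  have he : Real.log (4+z^2) / (κ * Real.sqrt (4+z^2))
      = κ⁻¹ * (Real.log (4+z^2) / Real.sqrt (4+z^2)) := by
    field_simp
  constructor
  · rw [hint, hzz, hsqrt, he]
    calc (1/12) * (κ⁻¹ * (Real.log (4+z^2) / Real.sqrt (4+z^2)))
        = κ⁻¹ * ((1/12) * (Real.log (4+z^2) / Real.sqrt (4+z^2))) := by ring
      _ ≤ κ⁻¹ * ∫ u, fz z u :=
          mul_le_mul_of_nonneg_left (lower_z z) (by positivity)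
  · rw [hint, hzz, hsqrt, he]
    calc κ⁻¹ * ∫ u, fz z u
        ≤ κ⁻¹ * (21 * (Real.log (4+z^2) / Real.sqrt (4+z^2))) :=
          mul_le_mul_of_nonneg_left (upper_z z) (by positivity)
      _ = 21 * (κ⁻¹ * (Real.log (4+z^2) / Real.sqrt (4+z^2))) := by ring
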